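/- Let ρ ⊆ A^m be a generalized quasiorder and ψ an equivalence relation on A. Then ψ ⊆ ρ^[2] if and only if the block factor relation ρ/[ψ] := {(B₁,…,B_m) ∈ (A/ψ)^m : B₁×…×B_m ⊆ ρ} is a generalized quasiorder on the quotient A/ψ. -/
import Mathlib


def IsGenTransitive {A : Type*} {m : ℕ} (ρ : Set (Fin m → A)) : Prop :=
  ∀ M : Fin m → Fin m → A,
    (∀ i, (fun j => M i j) ∈ ρ) → (∀ j, (fun i => M i j) ∈ ρ) →
    (fun i => M i i) ∈ ρ

def IsGQuord {A : Type*} {m : ℕ} (ρ : Set (Fin m → A)) : Prop :=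
  (∀ a : A, (fun _ => a) ∈ ρ) ∧ IsGenTransitive ρ

/-- a and b are exchangeable with respect to ρ: replacing a by b at any single
coordinate of any tuple preserves membership in ρ. -/
def Exch {A : Type*} {m : ℕ} (ρ : Set (Fin m → A)) (a b : A) : Prop :=
  ∀ (i : Fin m) (t : Fin m → A),
    Function.update t i a ∈ ρ ↔ Function.update t i b ∈ ρ

/-- A binary relation ψ has the exchange property w.r.t. ρ. -/
def ExchProp {A : Type*} {m : ℕ} (ψ : A → A → Prop) (ρ : Set (Fin m → A)) : Prop :=
  ∀ a b : Fin m → A, a ∈ ρ → (∀ i, ψ (a i) (b i)) → b ∈ ρ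

theorem blockFactor_gQuord_iff {A : Type*} {m : ℕ} (ρ : Set (Fin m → A))
    (h : IsGQuord ρ) (ψ : Setoid A) :
    (∀ a b : A, ψ.r a b → ∀ t : Fin m → A, (∀ i, t i = a ∨ t i = b) → t ∈ ρ) ↔
      IsGQuord {B : Fin m → Quotient ψ |
        ∀ a : Fin m → A, (∀ i, Quotient.mk ψ (a i) = B i) → a ∈ ρ} := by
  obtain ⟨hrefl, htrans⟩ := h
  constructor
  · intro hψ
    constructor
    · -- reflexivity of the block relation
      intro q
      induction q using Quotient.ind with
      | _ c =>
        intro a ha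
        have hrel : ∀ i, ψ.r c (a i) := fun i =>
          ψ.symm (Quotient.exact (ha i))
        have key := htrans (fun j k => if k = j then a j else c)
          (fun j => hψ c (a j) (hrel j) _ (by
            intro k
            by_cases hk : k = j <;> simp [hk]))
          (fun k => hψ c (a k) (hrel k) _ (by
            intro j
            by_cases hk : k = j <;> simp [hk]))
        simpa using key
    · -- generalized transitivity of the block relation
      intro M hrows hcols a ha
      have key := htrans (fun i j => if hij : i = j then a i else (M i j).out)
        (fun i => hrows i (fun j => if hij : i = j then a i else (M i j).out) (by
          intro j
          by_cases hij : i = j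
          · subst hij; simpa using ha i
          · simp [hij, Quotient.out_eq]))
        (fun j => hcols j (fun i => if hij : i = j then a i else (M i j).out) (by
          intro i
          by_cases hij : i = j
          · subst hij; simpa using ha i
          · simp [hij, Quotient.out_eq]))
      simpa using key
  · -- converse direction
    intro hgq a b hab t ht
    apply hgq.1 (Quotient.mk ψ a) t
    intro i
    rcases ht i with h1 | h1
    · rw [h1]
    · rw [h1]
      exact Quotient.sound (ψ.symm hab)
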